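/- Every p-fountain with n >= p coins and bottom row of length k >= p factors uniquely, by splitting at the first empty position of the next-to-bottom row, into a primitive (m+p-1, r+p-1) p-fountain and a p-fountain whose bottom row has length at least p-1; consequently f(n,k) = sum over 0 <= m <= n-p+1 and 0 <= r <= k-p+1 of g(m+p-1, r+p-1) f(n-m, k-r) for all n,k >= p. -/
import Mathlib


/-- A `p`-fountain: an arrangement of coins in rows. `rows i` is the set of positions of
coins in row `i` (row `0` is the bottom row). The bottom row consists of consecutive coins,
and each coin in a higher row has exactly `p+1` descendant coins immediately below it
(so two horizontally adjacent coins share exactly `p` common descendants). -/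
structure Fountain (p : ℕ) where
  rows : ℕ → Finset ℕ
  bottom_consecutive : rows 0 = Finset.range (rows 0).card
  supported : ∀ i j, j ∈ rows (i + 1) → ∀ d ≤ p, j + d ∈ rows i

namespace Fountain
variable {p : ℕ}

/-- The length of the bottom row. -/
def width (F : Fountain p) : ℕ := (F.rows 0).card

/-- The total number of coins. (For `p ≥ 1` all rows above row `width` are empty.) -/
def coins (F : Fountain p) : ℕ := ∑ i ∈ Finset.range (F.width + 1), (F.rows i).card

/-- A fountain is primitive if its next-to-bottom row is full, i.e. has `width - p` coins
(in particular this requires `width ≥ p`). -/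
def Primitive (F : Fountain p) : Prop :=
  p ≤ F.width ∧ F.rows 1 = Finset.range (F.width - p)

end Fountain

/-- `fcount p n k` = number of `(n,k)` `p`-fountains. -/
noncomputable def fcount (p n k : ℕ) : ℕ :=
  Set.ncard {F : Fountain p | F.coins = n ∧ F.width = k}

/-- `gcount p n k` = number of primitive `(n,k)` `p`-fountains. -/
noncomputable def gcount (p n k : ℕ) : ℕ :=
  Set.ncard {F : Fountain p | F.Primitive ∧ F.coins = n ∧ F.width = k}

/-- `hcount p n k` = number of non-primitive `(n,k)` `p`-fountains. -/
noncomputable def hcount (p n k : ℕ) : ℕ :=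
  Set.ncard {F : Fountain p | ¬ F.Primitive ∧ F.coins = n ∧ F.width = k}

/-- The generating function `F(q,z) = ∑ f(n,k) qⁿ zᵏ`, where `q = X 0`, `z = X 1`. -/
noncomputable def Fgf (p : ℕ) : MvPowerSeries (Fin 2) ℚ :=
  fun d => (fcount p (d 0) (d 1) : ℚ)

/-- The generating function `G(q,z) = ∑ g(n,k) qⁿ zᵏ` of primitive fountains. -/
noncomputable def Ggf (p : ℕ) : MvPowerSeries (Fin 2) ℚ :=
  fun d => (gcount p (d 0) (d 1) : ℚ)

/-- The generating function `H(q,z) = ∑ h(n,k) qⁿ zᵏ` of non-primitive fountains. -/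
noncomputable def Hgf (p : ℕ) : MvPowerSeries (Fin 2) ℚ :=
  fun d => (hcount p (d 0) (d 1) : ℚ)

/-- The substituted series `F(q, qz) = ∑ f(n,k) q^{n+k} z^k`. -/
noncomputable def Fqz (p : ℕ) : MvPowerSeries (Fin 2) ℚ :=
  fun d => if d 1 ≤ d 0 then (fcount p (d 0 - d 1) (d 1) : ℚ) else 0


namespace Fountain
variable {p : ℕ}

theorem ext' {F G : Fountain p} (h : F.rows = G.rows) : F = G := by
  cases F; cases G; simp_all

lemma rows_zero (F : Fountain p) : F.rows 0 = Finset.range F.width := F.bottom_consecutive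

lemma subset_succ (F : Fountain p) (i : ℕ) : F.rows (i + 1) ⊆ F.rows i := fun j hj => by
  simpa using F.supported i j hj 0 (Nat.zero_le p)

lemma subset_one (F : Fountain p) (i : ℕ) : F.rows (i + 1) ⊆ F.rows 1 := by
  induction i with
  | zero => exact fun j h => h
  | succ i ih => exact (F.subset_succ (i + 1)).trans ih

lemma subset_zeroth (F : Fountain p) (i : ℕ) : F.rows i ⊆ F.rows 0 := by
  induction i with
  | zero => exact fun j h => h
  | succ i ih => exact (F.subset_succ i).trans ih

lemma lt_width_of_mem (F : Fountain p) {i j : ℕ} (h : j ∈ F.rows i) : j < F.width := by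
  have := F.subset_zeroth i h
  rw [rows_zero] at this
  exact Finset.mem_range.mp this

lemma descend (F : Fountain p) : ∀ i j, j ∈ F.rows (i + 1) → j + i * p ∈ F.rows 1 := by
  intro i
  induction i with
  | zero => intro j h; simpa using h
  | succ i ih =>
    intro j h
    have h1 : j + p ∈ F.rows (i + 1) := F.supported (i + 1) j h p le_rfl
    have h2 := ih (j + p) h1
    have e : j + p + i * p = j + (i + 1) * p := by ring
    rwa [e] at h2

lemma card_add_le (hp : 1 ≤ p) (F : Fountain p) :
    ∀ i, (F.rows i).Nonempty → (F.rows i).card + i ≤ F.width := by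
  intro i
  induction i with
  | zero => intro _; simp [width]
  | succ i ih =>
    intro h
    set M := (F.rows (i + 1)).max' h with hM
    have hMmem : M ∈ F.rows (i + 1) := Finset.max'_mem _ h
    have hMp : M + p ∈ F.rows i := F.supported i M hMmem p le_rfl
    have hnot : M + p ∉ F.rows (i + 1) := fun hc => by
      have := Finset.le_max' _ _ hc; omega
    have hss : F.rows (i + 1) ⊂ F.rows i :=
      (Finset.ssubset_iff_of_subset (F.subset_succ i)).mpr ⟨M + p, hMp, hnot⟩
    have hlt := Finset.card_lt_card hss
    have hne : (F.rows i).Nonempty := ⟨M, F.subset_succ i hMmem⟩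
    have := ih hne
    omega

lemma rows_eq_empty (hp : 1 ≤ p) (F : Fountain p) {i : ℕ} (h : F.width ≤ i) :
    F.rows i = ∅ := by
  by_contra hne
  have hne' := Finset.nonempty_iff_ne_empty.mpr hne
  have h1 := card_add_le hp F i hne'
  have h2 : 0 < (F.rows i).card := Finset.card_pos.mpr hne'
  omega

lemma coins_eq_sum (hp : 1 ≤ p) (F : Fountain p) {N : ℕ} (hN : F.width < N) :
    F.coins = ∑ i ∈ Finset.range N, (F.rows i).card := by
  unfold coins
  apply Finset.sum_subset
  · intro x hx
    simp only [Finset.mem_range] at *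
    omega
  · intro x hx1 hx2
    simp only [Finset.mem_range] at hx1 hx2
    rw [rows_eq_empty hp F (by omega)]
    simp

lemma width_le_coins (F : Fountain p) : F.width ≤ F.coins := by
  have h0 : (0 : ℕ) ∈ Finset.range (F.width + 1) := by simp
  calc F.width = (F.rows 0).card := rfl
    _ ≤ _ := Finset.single_le_sum (f := fun i => (F.rows i).card) (fun i _ => Nat.zero_le _) h0

/-- The first empty position in the next-to-bottom row. -/
noncomputable def firstGap (F : Fountain p) : ℕ :=
  Nat.find (Infinite.exists_notMem_finset (F.rows 1))

lemma firstGap_notMem (F : Fountain p) : F.firstGap ∉ F.rows 1 :=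
  Nat.find_spec (Infinite.exists_notMem_finset (F.rows 1))

lemma mem_of_lt_firstGap (F : Fountain p) {j : ℕ} (h : j < F.firstGap) : j ∈ F.rows 1 := by
  have := Nat.find_min (Infinite.exists_notMem_finset (F.rows 1)) h
  simpa using this

lemma firstGap_eq (F : Fountain p) {r : ℕ} (h1 : r ∉ F.rows 1)
    (h2 : ∀ j < r, j ∈ F.rows 1) : F.firstGap = r := by
  refine le_antisymm (Nat.find_le h1) ?_
  by_contra hlt
  exact F.firstGap_notMem (h2 _ (by omega))

lemma firstGap_add_p_le (F : Fountain p) (hk : p ≤ F.width) :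
    F.firstGap + p ≤ F.width := by
  have h1 : F.width - p ∉ F.rows 1 := by
    intro h
    have h2 := F.supported 0 _ h p le_rfl
    have := F.lt_width_of_mem h2
    omega
  have h3 : F.firstGap ≤ F.width - p := Nat.find_le h1
  omega

lemma side (F : Fountain p) : ∀ i j, j ∈ F.rows (i + 1) →
    j + i * p < F.firstGap ∨ F.firstGap < j := by
  intro i
  induction i with
  | zero =>
    intro j h
    have : j ≠ F.firstGap := fun e => F.firstGap_notMem (e ▸ h)
    omega
  | succ i ih =>
    intro j h
    have h0 : j ∈ F.rows (i + 1) := F.subset_succ (i + 1) h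
    have hjp : j + p ∈ F.rows (i + 1) := F.supported (i + 1) j h p le_rfl
    rcases ih j h0 with hl | hr
    · rcases ih (j + p) hjp with hl2 | hr2
      · left
        have : (i + 1) * p = i * p + p := by ring
        omega
      · exfalso
        have hd : F.firstGap - j ≤ p := by omega
        have hmem : j + (F.firstGap - j) ∈ F.rows (i + 1) := F.supported (i + 1) j h _ hd
        rw [Nat.add_sub_cancel' (by omega : j ≤ F.firstGap)] at hmem
        exact F.firstGap_notMem (F.subset_one i hmem)
    · right; exact hr

/-- Rows of the left (primitive) part of the split. -/
noncomputable def splitLrows (F : Fountain p) : ℕ → Finset ℕ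
  | 0 => Finset.range (F.firstGap + p)
  | (i + 1) => (F.rows (i + 1)).filter (fun j => j + i * p < F.firstGap)

/-- Rows of the right part of the split. -/
noncomputable def splitRrows (F : Fountain p) : ℕ → Finset ℕ
  | 0 => Finset.range (F.width - F.firstGap - 1)
  | (i + 1) => ((F.rows (i + 1)).filter (fun j => F.firstGap < j)).image
      (fun j => j - (F.firstGap + 1))

/-- The left (primitive) part of the split. -/
noncomputable def splitL (F : Fountain p) : Fountain p where
  rows := F.splitLrows
  bottom_consecutive := by simp [splitLrows]
  supported := by
    intro i j hj d hd
    match i with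
    | 0 =>
      simp only [splitLrows, Finset.mem_filter, Finset.mem_range] at *
      omega
    | (i + 1) =>
      simp only [splitLrows, Finset.mem_filter] at *
      refine ⟨F.supported (i + 1) j hj.1 d hd, ?_⟩
      have h2 := hj.2
      have : (i + 1) * p = i * p + p := by ring
      omega

/-- The right part of the split. -/
noncomputable def splitR (F : Fountain p) : Fountain p where
  rows := F.splitRrows
  bottom_consecutive := by simp [splitRrows]
  supported := by
    intro i j hj d hd
    match i with
    | 0 =>
      simp only [splitRrows, Finset.mem_image, Finset.mem_filter, Finset.mem_range] at *
      obtain ⟨a, ⟨ha, hga⟩, rfl⟩ := hj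
      have h2 := F.lt_width_of_mem (F.supported 0 a ha d hd)
      omega
    | (i + 1) =>
      simp only [splitRrows, Finset.mem_image, Finset.mem_filter] at *
      obtain ⟨a, ⟨ha, hga⟩, rfl⟩ := hj
      exact ⟨a + d, ⟨F.supported (i + 1) a ha d hd, by omega⟩, by omega⟩

/-- Rows of the glued fountain. -/
def gluerows (G H : Fountain p) : ℕ → Finset ℕ
  | 0 => Finset.range (G.width - p + 1 + H.width)
  | (i + 1) => G.rows (i + 1) ∪ (H.rows (i + 1)).image (fun j => j + (G.width - p + 1))

/-- Glue a primitive fountain `G` and a fountain `H` into one fountain. -/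
def glue (G H : Fountain p) (hG : p ≤ G.width) (hH : p - 1 ≤ H.width) : Fountain p where
  rows := gluerows G H
  bottom_consecutive := by simp [gluerows]
  supported := by
    intro i j hj d hd
    match i with
    | 0 =>
      simp only [gluerows, Finset.mem_union, Finset.mem_image, Finset.mem_range] at *
      rcases hj with hj | ⟨a, ha, rfl⟩
      · have := G.lt_width_of_mem (G.supported 0 j hj d hd)
        omega
      · have := H.lt_width_of_mem (H.supported 0 a ha d hd)
        omega
    | (i + 1) =>
      simp only [gluerows, Finset.mem_union, Finset.mem_image] at *
      rcases hj with hj | ⟨a, ha, rfl⟩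
      · exact Or.inl (G.supported (i + 1) j hj d hd)
      · exact Or.inr ⟨a + d, H.supported (i + 1) a ha d hd, by omega⟩

@[simp] lemma splitL_rows (F : Fountain p) (i : ℕ) : F.splitL.rows i = F.splitLrows i := rfl
@[simp] lemma splitR_rows (F : Fountain p) (i : ℕ) : F.splitR.rows i = F.splitRrows i := rfl
@[simp] lemma glue_rows (G H : Fountain p) (hG hH) (i : ℕ) :
    (glue G H hG hH).rows i = gluerows G H i := rfl

@[simp] lemma splitL_width (F : Fountain p) : F.splitL.width = F.firstGap + p := by
  simp [width, splitLrows]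

@[simp] lemma splitR_width (F : Fountain p) :
    F.splitR.width = F.width - F.firstGap - 1 := by
  simp [width, splitRrows]

@[simp] lemma glue_width (G H : Fountain p) (hG hH) :
    (glue G H hG hH).width = G.width - p + 1 + H.width := by
  simp [width, gluerows]

lemma splitL_primitive (F : Fountain p) : F.splitL.Primitive := by
  constructor
  · simp
  · rw [splitL_width, Nat.add_sub_cancel]
    ext j
    simp only [splitL_rows, splitLrows, Finset.mem_filter, Finset.mem_range, Nat.zero_mul,
      Nat.add_zero]
    constructor
    · rintro ⟨-, h⟩; omega
    · intro h; exact ⟨F.mem_of_lt_firstGap (by omega), by omega⟩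

lemma card_rows_split (F : Fountain p) (i : ℕ) :
    (F.rows (i + 1)).card = (F.splitL.rows (i + 1)).card + (F.splitR.rows (i + 1)).card := by
  have himg : (F.splitR.rows (i + 1)).card
      = ((F.rows (i + 1)).filter (fun j => F.firstGap < j)).card := by
    simp only [splitR_rows, splitRrows]
    apply Finset.card_image_of_injOn
    intro a ha b hb hab
    simp only [Finset.mem_coe, Finset.mem_filter] at ha hb
    have hab' : a - (F.firstGap + 1) = b - (F.firstGap + 1) := hab
    omega
  rw [himg]
  simp only [splitL_rows, splitLrows]
  have hunion : F.rows (i + 1)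
      = (F.rows (i + 1)).filter (fun j => j + i * p < F.firstGap)
        ∪ (F.rows (i + 1)).filter (fun j => F.firstGap < j) := by
    ext j
    simp only [Finset.mem_union, Finset.mem_filter]
    constructor
    · intro h
      rcases F.side i j h with h1 | h1
      exacts [Or.inl ⟨h, h1⟩, Or.inr ⟨h, h1⟩]
    · rintro (⟨h, -⟩ | ⟨h, -⟩) <;> exact h
  rw [← Finset.card_union_of_disjoint, ← hunion]
  rw [Finset.disjoint_left]
  intro a ha hb
  simp only [Finset.mem_filter] at ha hb
  omega

lemma split_width (hp : 1 ≤ p) (F : Fountain p) (hk : p ≤ F.width) :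
    F.width + (p - 1) = F.splitL.width + F.splitR.width := by
  have := F.firstGap_add_p_le hk
  simp only [splitL_width, splitR_width]
  omega

lemma split_coins (hp : 1 ≤ p) (F : Fountain p) (hk : p ≤ F.width) :
    F.coins + (p - 1) = F.splitL.coins + F.splitR.coins := by
  have hfg := F.firstGap_add_p_le hk
  have h1 : F.coins = ∑ i ∈ Finset.range (F.width + 1), (F.rows i).card :=
    coins_eq_sum hp F (by omega)
  have h2 : F.splitL.coins = ∑ i ∈ Finset.range (F.width + 1), (F.splitL.rows i).card :=
    coins_eq_sum hp _ (by simp only [splitL_width]; omega)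
  have h3 : F.splitR.coins = ∑ i ∈ Finset.range (F.width + 1), (F.splitR.rows i).card :=
    coins_eq_sum hp _ (by simp only [splitR_width]; omega)
  rw [h1, h2, h3, Finset.sum_range_succ', Finset.sum_range_succ', Finset.sum_range_succ']
  have hsum : ∑ i ∈ Finset.range F.width, (F.rows (i + 1)).card
      = ∑ i ∈ Finset.range F.width, (F.splitL.rows (i + 1)).card
        + ∑ i ∈ Finset.range F.width, (F.splitR.rows (i + 1)).card := by
    rw [← Finset.sum_add_distrib]
    exact Finset.sum_congr rfl fun i _ => card_rows_split F i
  have c0 : (F.rows 0).card = F.width := rfl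
  have cL : (F.splitL.rows 0).card = F.firstGap + p := by
    simp [splitLrows]
  have cR : (F.splitR.rows 0).card = F.width - F.firstGap - 1 := by
    simp [splitRrows]
  rw [c0, cL, cR]
  omega

lemma glue_split (hp : 1 ≤ p) (F : Fountain p) (hk : p ≤ F.width) (h1 h2) :
    glue F.splitL F.splitR h1 h2 = F := by
  have hfg := F.firstGap_add_p_le hk
  apply ext'
  funext i
  match i with
  | 0 =>
    show gluerows _ _ 0 = F.rows 0
    rw [rows_zero]
    simp only [gluerows, splitL_width, splitR_width]
    congr 1
    omega
  | (i + 1) =>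
    show gluerows _ _ (i + 1) = F.rows (i + 1)
    simp only [gluerows, splitL_rows, splitR_rows, splitLrows, splitRrows, splitL_width]
    have hsh : F.firstGap + p - p + 1 = F.firstGap + 1 := by omega
    rw [hsh]
    ext j
    simp only [Finset.mem_union, Finset.mem_filter, Finset.mem_image]
    constructor
    · rintro (⟨hj, -⟩ | ⟨a, ⟨b, ⟨hb, hgb⟩, rfl⟩, rfl⟩)
      · exact hj
      · show b - (F.firstGap + 1) + (F.firstGap + 1) ∈ F.rows (i + 1)
        rw [Nat.sub_add_cancel (by omega)]
        exact hb
    · intro hj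
      rcases F.side i j hj with hl | hr
      · exact Or.inl ⟨hj, hl⟩
      · refine Or.inr ⟨j - (F.firstGap + 1), ⟨j, ⟨hj, hr⟩, rfl⟩, ?_⟩
        show j - (F.firstGap + 1) + (F.firstGap + 1) = j
        omega

lemma firstGap_glue (G H : Fountain p) (hG : G.Primitive) (h1 h2) :
    (glue G H h1 h2).firstGap = G.width - p := by
  apply firstGap_eq
  · show G.width - p ∉ gluerows G H 1
    simp only [gluerows, Finset.mem_union, Finset.mem_image, hG.2, Finset.mem_range]
    push_neg
    exact ⟨by omega, fun a _ => by omega⟩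
  · intro j hj
    show j ∈ gluerows G H 1
    simp only [gluerows, Finset.mem_union, hG.2, Finset.mem_range]
    exact Or.inl hj

lemma splitL_glue (G H : Fountain p) (hG : G.Primitive) (hH : p - 1 ≤ H.width) (h1 h2) :
    (glue G H h1 h2).splitL = G := by
  have hfg := firstGap_glue G H hG h1 h2
  have hGw : p ≤ G.width := hG.1
  apply ext'
  funext i
  match i with
  | 0 =>
    show splitLrows _ 0 = G.rows 0
    rw [rows_zero]
    simp only [splitLrows, hfg]
    congr 1
    omega
  | (i + 1) =>
    show splitLrows _ (i + 1) = G.rows (i + 1)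
    simp only [splitLrows, hfg, glue_rows, gluerows]
    ext j
    simp only [Finset.mem_filter, Finset.mem_union, Finset.mem_image]
    constructor
    · rintro ⟨hj | ⟨a, ha, rfl⟩, hcond⟩
      · exact hj
      · omega
    · intro hj
      refine ⟨Or.inl hj, ?_⟩
      have := G.descend i j hj
      rw [hG.2] at this
      exact Finset.mem_range.mp this

lemma splitR_glue (G H : Fountain p) (hG : G.Primitive) (hH : p - 1 ≤ H.width) (h1 h2) :
    (glue G H h1 h2).splitR = H := by
  have hfg := firstGap_glue G H hG h1 h2
  have hGw : p ≤ G.width := hG.1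
  apply ext'
  funext i
  match i with
  | 0 =>
    show splitRrows _ 0 = H.rows 0
    rw [rows_zero]
    simp only [splitRrows, hfg, glue_width]
    congr 1
    omega
  | (i + 1) =>
    show splitRrows _ (i + 1) = H.rows (i + 1)
    simp only [splitRrows, hfg, glue_rows, gluerows]
    ext j
    simp only [Finset.mem_image, Finset.mem_filter, Finset.mem_union]
    constructor
    · rintro ⟨a, ⟨hmem | ⟨b, hb, rfl⟩, hga⟩, rfl⟩
      · exfalso
        have := G.descend i a hmem
        rw [hG.2] at this
        have := Finset.mem_range.mp this
        omega
      · have : b + (G.width - p + 1) - (G.width - p + 1) = b := by omega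
        rw [this]
        exact hb
    · intro hj
      exact ⟨j + (G.width - p + 1), ⟨Or.inr ⟨j, hj, rfl⟩, by omega⟩, by omega⟩

/-- The splitting equivalence. -/
noncomputable def splitEquiv (hp : 1 ≤ p) :
    {F : Fountain p // p ≤ F.coins ∧ p ≤ F.width} ≃
    {GH : Fountain p × Fountain p // GH.1.Primitive ∧ p - 1 ≤ GH.2.width} where
  toFun F := ⟨(F.1.splitL, F.1.splitR), F.1.splitL_primitive, by
    have := F.1.firstGap_add_p_le F.2.2
    simp only [splitR_width]
    omega⟩
  invFun GH := ⟨glue GH.1.1 GH.1.2 GH.2.1.1 GH.2.2, by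
    have hw : p ≤ (glue GH.1.1 GH.1.2 GH.2.1.1 GH.2.2).width := by
      simp only [glue_width]
      have := GH.2.1.1
      have := GH.2.2
      omega
    exact ⟨hw.trans (width_le_coins _), hw⟩⟩
  left_inv F := Subtype.ext (glue_split hp F.1 F.2.2 F.1.splitL_primitive.1
    (by have := F.1.firstGap_add_p_le F.2.2; simp only [splitR_width]; omega))
  right_inv GH := Subtype.ext (Prod.ext
    (splitL_glue GH.1.1 GH.1.2 GH.2.1 GH.2.2 GH.2.1.1 GH.2.2)
    (splitR_glue GH.1.1 GH.1.2 GH.2.1 GH.2.2 GH.2.1.1 GH.2.2))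

lemma finite_width_set (hp : 1 ≤ p) (k : ℕ) : {F : Fountain p | F.width = k}.Finite := by
  classical
  have hinj : Set.InjOn (fun (F : Fountain p) => (fun i : Fin (k + 1) => F.rows i))
      {F : Fountain p | F.width = k} := by
    intro F hF F' hF' h
    simp only [Set.mem_setOf_eq] at hF hF'
    apply ext'
    funext i
    by_cases hi : i < k + 1
    · exact congrFun h ⟨i, hi⟩
    · rw [rows_eq_empty hp F (by omega), rows_eq_empty hp F' (by omega)]
  apply Set.Finite.of_finite_image ?_ hinj
  apply Set.Finite.subset (Set.Finite.pi
    (fun _ : Fin (k + 1) => (Finset.range k).powerset.finite_toSet))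
  intro g hg
  simp only [Set.mem_image] at hg
  obtain ⟨F, hF, rfl⟩ := hg
  simp only [Set.mem_setOf_eq] at hF
  rw [Set.mem_univ_pi]
  intro i
  simp only [Finset.coe_powerset, Set.mem_preimage, Set.mem_powerset_iff, Finset.coe_subset,
    Finset.mem_coe]
  intro j hj
  have := F.lt_width_of_mem hj
  simp only [Finset.mem_range]
  omega

end Fountain

/-- Every `p`-fountain with `n ≥ p` coins and bottom row of length `k ≥ p` factors
uniquely, by splitting at the first empty position of the next-to-bottom row, into a
primitive piece and a piece whose bottom row has length at least `p-1`; in the splitting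
`p-1` coins are doubled, so coins and widths add up to `n + p - 1` resp. `k + p - 1`.
Consequently `f(n,k) = ∑_{0≤m≤n-p+1} ∑_{0≤r≤k-p+1} g(m+p-1, r+p-1) f(n-m, k-r)`. -/
theorem fountain_factorization (p : ℕ) (hp : 1 ≤ p) :
    (∃ e : {F : Fountain p // p ≤ F.coins ∧ p ≤ F.width} ≃
        {GH : Fountain p × Fountain p // GH.1.Primitive ∧ p - 1 ≤ GH.2.width},
      ∀ F, F.1.coins + (p - 1) = (e F).1.1.coins + (e F).1.2.coins ∧
           F.1.width + (p - 1) = (e F).1.1.width + (e F).1.2.width) ∧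
    ∀ n k, p ≤ n → p ≤ k →
      fcount p n k =
        ∑ m ∈ Finset.range (n - p + 2), ∑ r ∈ Finset.range (k - p + 2),
          gcount p (m + p - 1) (r + p - 1) * fcount p (n - m) (k - r) := by
  constructor
  · exact ⟨Fountain.splitEquiv hp, fun F =>
      ⟨Fountain.split_coins hp F.1 F.2.2, Fountain.split_width hp F.1 F.2.2⟩⟩
  · intro n k hn hk
    classical
    set e := Fountain.splitEquiv (p := p) hp with he
    have hS : {F : Fountain p | F.coins = n ∧ F.width = k}.Finite :=
      (Fountain.finite_width_set hp k).subset (fun F hF => hF.2)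
    set T : Set (Fountain p × Fountain p) :=
      {GH | GH.1.Primitive ∧ p - 1 ≤ GH.2.width ∧
        GH.1.coins + GH.2.coins = n + p - 1 ∧ GH.1.width + GH.2.width = k + p - 1} with hTdef
    have hbij : Set.BijOn (fun F : Fountain p => (F.splitL, F.splitR))
        {F : Fountain p | F.coins = n ∧ F.width = k} T := by
      refine ⟨?_, ?_, ?_⟩
      · intro F hF
        simp only [Set.mem_setOf_eq] at hF
        have hkF : p ≤ F.width := by omega
        have hfg := F.firstGap_add_p_le hkF
        have hc := Fountain.split_coins hp F hkF
        have hw := Fountain.split_width hp F hkF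
        show (F.splitL, F.splitR) ∈ T
        refine ⟨F.splitL_primitive, ?_, ?_, ?_⟩
        · show p - 1 ≤ F.splitR.width
          simp only [Fountain.splitR_width]
          omega
        · show F.splitL.coins + F.splitR.coins = n + p - 1
          omega
        · show F.splitL.width + F.splitR.width = k + p - 1
          omega
      · intro F hF F' hF' hfe
        simp only [Set.mem_setOf_eq] at hF hF'
        have h1 : p ≤ F.coins ∧ p ≤ F.width := ⟨by omega, by omega⟩
        have h1' : p ≤ F'.coins ∧ p ≤ F'.width := ⟨by omega, by omega⟩
        have heq : e ⟨F, h1⟩ = e ⟨F', h1'⟩ := Subtype.ext hfe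
        have := e.injective heq
        exact congrArg Subtype.val this
      · intro GH hGH
        obtain ⟨hprim, hHw, hc, hw⟩ := hGH
        set x := e.symm ⟨GH, hprim, hHw⟩ with hx
        have hex : e x = ⟨GH, hprim, hHw⟩ := e.apply_symm_apply _
        have hxval : (x.1.splitL, x.1.splitR) = GH := congrArg Subtype.val hex
        have hL : x.1.splitL = GH.1 := congrArg Prod.fst hxval
        have hR : x.1.splitR = GH.2 := congrArg Prod.snd hxval
        have hkx : p ≤ x.1.width := x.2.2
        have hcx := Fountain.split_coins hp x.1 hkx
        have hwx := Fountain.split_width hp x.1 hkx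
        rw [hL, hR] at hcx hwx
        have hc2 := GH.2.width_le_coins
        refine ⟨x.1, ⟨by omega, by omega⟩, hxval⟩
    have hT : T.Finite := hbij.image_eq ▸ hS.image _
    have h1 : fcount p n k = T.ncard := by
      show Set.ncard _ = _
      rw [← hbij.image_eq, Set.ncard_image_of_injOn hbij.injOn]
    rw [h1, Set.ncard_eq_toFinset_card _ hT]
    have hmapsto : ∀ GH ∈ hT.toFinset,
        (GH.1.coins - (p - 1), GH.1.width - (p - 1))
          ∈ Finset.range (n - p + 2) ×ˢ Finset.range (k - p + 2) := by
      intro GH hGH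
      rw [Set.Finite.mem_toFinset] at hGH
      obtain ⟨hprim, hHw, hc, hw⟩ := hGH
      have h1 : p ≤ GH.1.width := hprim.1
      have h2 := GH.1.width_le_coins
      have h3 := GH.2.width_le_coins
      simp only [Finset.mem_product, Finset.mem_range]
      omega
    rw [Finset.card_eq_sum_card_fiberwise hmapsto, Finset.sum_product]
    refine Finset.sum_congr rfl fun m hm => Finset.sum_congr rfl fun r hr => ?_
    rw [Finset.mem_range] at hm hr
    have hGfin : {G : Fountain p | G.Primitive ∧ G.coins = m + p - 1
        ∧ G.width = r + p - 1}.Finite :=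
      (Fountain.finite_width_set hp (r + p - 1)).subset (fun F hF => hF.2.2)
    have hHfin : {H : Fountain p | H.coins = n - m ∧ H.width = k - r}.Finite :=
      (Fountain.finite_width_set hp (k - r)).subset (fun F hF => hF.2)
    have hfib : hT.toFinset.filter
          (fun GH => (GH.1.coins - (p - 1), GH.1.width - (p - 1)) = (m, r))
        = hGfin.toFinset ×ˢ hHfin.toFinset := by
      ext GH
      simp only [Finset.mem_filter, Set.Finite.mem_toFinset, Finset.mem_product,
        Prod.mk.injEq, hTdef, Set.mem_setOf_eq]
      constructor
      · rintro ⟨⟨hprim, hHw, hc, hw⟩, hcm, hwr⟩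
        have h1 : p ≤ GH.1.width := hprim.1
        have h2 := GH.1.width_le_coins
        have h3 := GH.2.width_le_coins
        exact ⟨⟨hprim, by omega, by omega⟩, by omega, by omega⟩
      · rintro ⟨⟨hprim, hGc, hGw⟩, hHc, hHw⟩
        have h1 : p ≤ GH.1.width := hprim.1
        have h3 := GH.2.width_le_coins
        exact ⟨⟨hprim, by omega, by omega, by omega⟩, by omega, by omega⟩
    rw [hfib, Finset.card_product]
    rw [show gcount p (m + p - 1) (r + p - 1)
        = Set.ncard {G : Fountain p | G.Primitive ∧ G.coins = m + p - 1
            ∧ G.width = r + p - 1} from rfl,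
      show fcount p (n - m) (k - r)
        = Set.ncard {H : Fountain p | H.coins = n - m ∧ H.width = k - r} from rfl,
      Set.ncard_eq_toFinset_card _ hGfin, Set.ncard_eq_toFinset_card _ hHfin]
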